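/- Let M be a binary matroid, T ⊆ E(M), and let C be a circuit of M containing an odd number of elements of T. Then C ∪ {a} is a circuit of the element splitting matroid M'_T, where a is the new element. -/

import Mathlib

open Set

variable {α : Type*}

/-- The rank of a set `X` in a matroid `M`: the maximum size of an independent subset of `X`. -/
noncomputable def mrank (M : Matroid α) (X : Set α) : ℕ :=
  sSup {n | ∃ I, M.Indep I ∧ I ⊆ X ∧ I.ncard = n}

/-- `(A, B)` is a `k`-separation of `M`: a partition of the ground set with both sides of
size at least `k` and `r(A) + r(B) - r(M) ≤ k - 1` (written additively). -/
def IsKSeparation (M : Matroid α) (k : ℕ) (A B : Set α) : Prop :=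
  A ∪ B = M.E ∧ Disjoint A B ∧ k ≤ A.ncard ∧ k ≤ B.ncard ∧
    mrank M A + mrank M B + 1 ≤ mrank M M.E + k

/-- `M` is `n`-connected if it has no `k`-separation for any `k < n`. -/
def NConnected (M : Matroid α) (n : ℕ) : Prop :=
  ∀ k A B, 1 ≤ k → k < n → ¬ IsKSeparation M k A B

/-- A circuit is a minimal dependent set. -/
def MCircuit (M : Matroid α) (C : Set α) : Prop := Minimal M.Dep C

/-- A cocircuit is a circuit of the dual matroid. -/
def MCocircuit (M : Matroid α) (C : Set α) : Prop := MCircuit M✶ C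

/-- A loop is a dependent singleton. -/
def MLoop (M : Matroid α) (e : α) : Prop := M.Dep {e}

/-- A coloop is a loop of the dual, i.e. an element lying in every base. -/
def MColoop (M : Matroid α) (e : α) : Prop := M✶.Dep {e}

/-- `M` is the vector matroid of the family of vectors `φ` over `GF(2)`:
a set is independent iff it lies in the ground set and the corresponding
vectors are linearly independent. -/
def IsRep {W : Type*} [AddCommGroup W] [Module (ZMod 2) W] (M : Matroid α) (φ : α → W) : Prop :=
  ∀ I : Set α, M.Indep I ↔ I ⊆ M.E ∧ LinearIndependent (ZMod 2) (I.restrict φ)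

open scoped Classical in
/-- The columns of the element splitting matrix `A'_T`: each original column gets an extra
coordinate (the new row), equal to `1` exactly on the columns labelled by `T`, and a new
column `a` which is `1` in the new row and `0` elsewhere. -/
noncomputable def splitRep {W : Type*} [AddCommGroup W] [Module (ZMod 2) W]
    (φ : α → W) (T : Set α) (a : α) : α → W × ZMod 2 :=
  fun x => if x = a then (0, 1) else (φ x, if x ∈ T then 1 else 0)

/-- `N` is the element splitting matroid `M'_T` of the binary matroid `M` (represented by `φ`)
with respect to `T`, with new element `a`. -/
def IsEleSplit {W : Type*} [AddCommGroup W] [Module (ZMod 2) W]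
    (M : Matroid α) (φ : α → W) (T : Set α) (a : α) (N : Matroid α) : Prop :=
  a ∉ M.E ∧ N.E = insert a M.E ∧ IsRep N (splitRep φ T a)

/-- `M` is the contraction `N / a` of the single element `a` from `N`. -/
def ContractElemEq (N : Matroid α) (a : α) (M : Matroid α) : Prop :=
  M.E = N.E \ {a} ∧ ∀ I : Set α,
    M.Indep I ↔ a ∉ I ∧
      ((N.Indep {a} ∧ N.Indep (insert a I)) ∨ (¬ N.Indep {a} ∧ N.Indep I))


open scoped Classical

private lemma zmod2_eq_one : ∀ {c : ZMod 2}, c ≠ 0 → c = 1 := by decide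

private lemma sum_pair {α β γ : Type*} [AddCommMonoid β] [AddCommMonoid γ]
    (s : Finset α) (f : α → β) (g : α → γ) :
    ∑ x ∈ s, (f x, g x) = (∑ x ∈ s, f x, ∑ x ∈ s, g x) := by
  rw [Prod.ext_iff]
  simp [Prod.fst_sum, Prod.snd_sum]

private lemma not_li_iff {α W : Type*} [AddCommGroup W] [Module (ZMod 2) W]
    (ψ : α → W) (D : Set α) :
    ¬ LinearIndependent (ZMod 2) (D.restrict ψ) ↔
      ∃ S : Finset α, ↑S ⊆ D ∧ S.Nonempty ∧ ∑ x ∈ S, ψ x = 0 := by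
  constructor
  · intro h
    rw [show D.restrict ψ = ψ ∘ (↑) from rfl, linearIndependent_comp_subtype_iff, linearIndepOn_iff] at h
    push_neg at h
    obtain ⟨l, hl, hlc, hlne⟩ := h
    refine ⟨l.support, (Finsupp.mem_supported _ _).mp hl, Finsupp.support_nonempty_iff.mpr hlne, ?_⟩
    rw [Finsupp.linearCombination_apply, Finsupp.sum] at hlc
    rw [← hlc]
    refine Finset.sum_congr rfl fun x hx => ?_
    rw [zmod2_eq_one (Finsupp.mem_support_iff.mp hx), one_smul]
  · rintro ⟨S, hSD, hSne, hSsum⟩ h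
    rw [show D.restrict ψ = ψ ∘ (↑) from rfl, linearIndependent_comp_subtype_iff, linearIndepOn_iff] at h
    set l : α →₀ ZMod 2 := ⟨S, fun x => if x ∈ S then 1 else 0, by intro a; simp⟩ with hldef
    have hsupp : l.support = S := rfl
    have h0 : l = 0 := by
      refine h l ?_ ?_
      · rw [Finsupp.mem_supported, hsupp]; exact hSD
      · rw [Finsupp.linearCombination_apply, Finsupp.sum, hsupp, ← hSsum]
        refine Finset.sum_congr rfl fun x hx => ?_
        show (if x ∈ S then (1 : ZMod 2) else 0) • ψ x = ψ x
        rw [if_pos hx, one_smul]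
    obtain ⟨x, hx⟩ := hSne
    have hx1 : l x = 1 := by show (if x ∈ S then (1 : ZMod 2) else 0) = 1; rw [if_pos hx]
    rw [h0] at hx1
    simpa using hx1

/-- If C is a circuit of M containing an odd number of elements of T, then C ∪ {a} is a
circuit of the element splitting matroid M'_T. -/
theorem circuit_odd_inter_insert_is_circuit_eleSplit {α W : Type*}
    [AddCommGroup W] [Module (ZMod 2) W]
    (M N : Matroid α) (φ : α → W) (hM : IsRep M φ) (T : Set α) (hT : T ⊆ M.E)
    (a : α) (hN : IsEleSplit M φ T a N)
    (C : Set α) (hC : MCircuit M C) (hodd : Odd ((C ∩ T).ncard)) :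
    MCircuit N (insert a C) := by
  classical
  obtain ⟨haE, hNE, hNrep⟩ := hN
  obtain ⟨hCdep, hCmin⟩ := hC
  have hCE : C ⊆ M.E := hCdep.subset_ground
  have hCni : ¬ M.Indep C := hCdep.not_indep
  have key : ∀ S : Finset α, ↑S ⊆ C → S.Nonempty → ∑ x ∈ S, φ x = 0 → (↑S : Set α) = C := by
    intro S hS hne hsum
    have hdep : M.Dep ↑S := by
      rw [Matroid.dep_iff]
      refine ⟨fun hI => ?_, hS.trans hCE⟩
      exact (not_li_iff φ ↑S).2 ⟨S, subset_rfl, hne, hsum⟩ ((hM _).1 hI).2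
    exact subset_antisymm hS (hCmin hdep hS)
  have hCnotli : ¬ LinearIndependent (ZMod 2) (C.restrict φ) :=
    fun h => hCni ((hM C).2 ⟨hCE, h⟩)
  obtain ⟨CF, hCFsub, hCFne, hCFsum⟩ := (not_li_iff φ C).1 hCnotli
  have hCF : (↑CF : Set α) = C := key CF hCFsub hCFne hCFsum
  set ψ := splitRep φ T a with hψdef
  have hψa : ψ a = ((0 : W), (1 : ZMod 2)) := by simp [hψdef, splitRep]
  have hψx : ∀ x, x ≠ a → ψ x = (φ x, if x ∈ T then 1 else 0) := by
    intro x hx; simp [hψdef, splitRep, hx]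
  have hxa : ∀ x ∈ C, x ≠ a := fun x hx h => haE (h ▸ hCE hx)
  have hχ : ∑ x ∈ CF, (if x ∈ T then (1 : ZMod 2) else 0) = 1 := by
    rw [Finset.sum_boole]
    have hcard : (CF.filter (· ∈ T)).card = (C ∩ T).ncard := by
      rw [← Set.ncard_coe_finset]
      congr 1
      ext x
      simp [← hCF]
    rw [hcard, ← ZMod.natCast_mod, Nat.odd_iff.mp hodd, Nat.cast_one]
  have haCF : a ∉ CF := fun h => haE (hCE (by rw [← hCF]; exact Finset.mem_coe.mpr h))
  have hsumCF : ∑ x ∈ CF, ψ x = ((0 : W), (1 : ZMod 2)) := by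
    have h1 : ∑ x ∈ CF, ψ x
        = ∑ x ∈ CF, ((φ x, if x ∈ T then (1 : ZMod 2) else 0) : W × ZMod 2) :=
      Finset.sum_congr rfl fun x hx =>
        hψx x (hxa x (by rw [← hCF]; exact Finset.mem_coe.mpr hx))
    rw [h1, sum_pair, hCFsum, hχ]
  have h110 : (1 : ZMod 2) + 1 = 0 := by decide
  have hdepN : N.Dep (insert a C) := by
    rw [Matroid.dep_iff]
    constructor
    · intro hI
      refine (not_li_iff ψ (insert a C)).2
        ⟨insert a CF, ?_, ⟨a, Finset.mem_insert_self a CF⟩, ?_⟩ ((hNrep _).1 hI).2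
      · rw [Finset.coe_insert, hCF]
      · rw [Finset.sum_insert haCF, hψa, hsumCF, Prod.mk_add_mk, add_zero, h110]
        rfl
    · rw [hNE]; exact Set.insert_subset_insert hCE
  refine ⟨hdepN, ?_⟩
  intro D hD hDsub
  have hDE : D ⊆ N.E := hD.subset_ground
  have hDnotli : ¬ LinearIndependent (ZMod 2) (D.restrict ψ) :=
    fun h => hD.not_indep ((hNrep D).2 ⟨hDE, h⟩)
  obtain ⟨S, hSD, hSne, hSsum⟩ := (not_li_iff ψ D).1 hDnotli
  by_cases haS : a ∈ S
  · set S' := S.erase a with hS'def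
    have hS'C : (↑S' : Set α) ⊆ C := by
      intro x hx
      obtain ⟨hxa', hxS⟩ := Finset.mem_erase.mp (Finset.mem_coe.mp hx)
      exact (hDsub (hSD (Finset.mem_coe.mpr hxS))).resolve_left hxa'
    have hS'a : ∀ x ∈ S', x ≠ a := fun x hx => (Finset.mem_erase.mp hx).1
    have hsplit : ∑ x ∈ S, ψ x = ψ a + ∑ x ∈ S', ψ x := (Finset.add_sum_erase S ψ haS).symm
    have hS'sum : ∑ x ∈ S', ψ x
        = (∑ x ∈ S', φ x, ∑ x ∈ S', if x ∈ T then (1 : ZMod 2) else 0) := by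
      rw [← sum_pair]
      exact Finset.sum_congr rfl fun x hx => hψx x (hS'a x hx)
    rw [hsplit, hS'sum, hψa, Prod.mk_add_mk, zero_add] at hSsum
    have hfst : ∑ x ∈ S', φ x = 0 := by simpa using congrArg Prod.fst hSsum
    have hsnd : (1 : ZMod 2) + ∑ x ∈ S', (if x ∈ T then (1 : ZMod 2) else 0) = 0 := by
      simpa using congrArg Prod.snd hSsum
    rcases Finset.eq_empty_or_nonempty S' with hemp | hne'
    · exfalso
      rw [hemp, Finset.sum_empty, add_zero] at hsnd
      exact one_ne_zero hsnd
    · have hS'eq : (↑S' : Set α) = C := key S' hS'C hne' hfst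
      intro x hx
      rcases hx with rfl | hxC
      · exact hSD (Finset.mem_coe.mpr haS)
      · have : x ∈ (↑S' : Set α) := hS'eq ▸ hxC
        exact hSD (Finset.mem_coe.mpr (Finset.mem_of_mem_erase (Finset.mem_coe.mp this)))
  · exfalso
    have hSC : (↑S : Set α) ⊆ C := by
      intro x hx
      refine (hDsub (hSD hx)).resolve_left fun h => haS ?_
      rw [← h]; exact Finset.mem_coe.mp hx
    have hSsum' : (∑ x ∈ S, φ x, ∑ x ∈ S, if x ∈ T then (1 : ZMod 2) else 0)
        = ((0 : W), (0 : ZMod 2)) := by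
      rw [← sum_pair]
      rw [show ((0 : W), (0 : ZMod 2)) = (0 : W × ZMod 2) from rfl, ← hSsum]
      exact (Finset.sum_congr rfl fun x hx =>
        hψx x (hxa x (hSC (Finset.mem_coe.mpr hx)))).symm
    rw [Prod.mk.injEq] at hSsum'
    obtain ⟨hfst, hsnd⟩ := hSsum'
    have hSeq : (↑S : Set α) = C := key S hSC hSne hfst
    have : S = CF := Finset.coe_injective (by rw [hSeq, hCF])
    rw [this, hχ] at hsnd
    exact one_ne_zero hsnd
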